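/- arXiv:2111.05230 — 2 statements merged into one kernel-verified Lean document; each statement's English description precedes it below -/
import Mathlib

section
/- Let T > 0, K, d ≥ 1, c ∈ ℝ^d, let b : [0,T] × ℝ^d → ℝ^d be continuous, bounded, and Lipschitz in the space variable uniformly in time (e.g. with bounded continuous partial derivatives ∂_{x_j} b_i), and let σ : [0,T] → ℝ^d and ξ : [0,T] → ℝ^K be bounded continuous. With Σ_{i,k}(r,t) := ∫_r^t σ_i(s)ξ_k(s) ds and Σ^{(i)}(r,t) ∈ ℝ^{K×d} the matrix whose (k,j) entry equals Σ_{i,k}(r,t) if j = i and 0 otherwise, there exists a continuous function u : [0,T] × ℝ^{K×d} → ℝ^d such that for every i ∈ {1,…,d} and all (t,x) ∈ [0,T] × ℝ^{K×d}: u_i(t,x) = c_i·exp(Σ_{k=1}^K [x_{ki} Σ_{i,k}(0,t) − Σ_{i,k}(0,t)²/2]) + ∫_0^t b_i(s, u(s, x − Σ^{(i)}(s,t)))·exp(Σ_{k=1}^K [x_{ki} Σ_{i,k}(s,t) − Σ_{i,k}(s,t)²/2]) ds. -/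
open MeasureTheory intervalIntegral

/-- `Σ_{i,k}(r,t) := ∫_r^t σ_i(s) ξ_k(s) ds`. -/
noncomputable def SigmaCoef {K d : ℕ} (σ : ℝ → Fin d → ℝ) (ξ : ℝ → Fin K → ℝ)
    (i : Fin d) (k : Fin K) (r t : ℝ) : ℝ :=
  ∫ s in r..t, σ s i * ξ s k

/-- `Σ^{(i)}(r,t)`: the `K × d` matrix whose `(k,j)` entry is `Σ_{i,k}(r,t)` if `j = i`
and `0` otherwise. -/
noncomputable def SigmaMat {K d : ℕ} (σ : ℝ → Fin d → ℝ) (ξ : ℝ → Fin K → ℝ)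
    (i : Fin d) (r t : ℝ) : Fin K → Fin d → ℝ :=
  fun k j => if j = i then SigmaCoef σ ξ i k r t else 0

namespace WZAux

variable {K d : ℕ}

noncomputable def tcl (T t : ℝ) : ℝ := max 0 (min t T)

lemma tcl_cont (T : ℝ) : Continuous (tcl T) :=
  continuous_const.max (continuous_id.min continuous_const)

lemma tcl_mem {T : ℝ} (hT : 0 ≤ T) (t : ℝ) : tcl T t ∈ Set.Icc 0 T := by
  constructor
  · exact le_max_left _ _
  · exact max_le hT (min_le_right _ _)

lemma tcl_eq {T t : ℝ} (h : t ∈ Set.Icc 0 T) : tcl T t = t := by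
  have := h.1; have := h.2
  simp [tcl, min_eq_left h.2, max_eq_right h.1]

noncomputable def qf (x : Fin K → Fin d → ℝ) : ℝ := ∑ k, ∑ j, x k j ^ 2 / 2

lemma qf_cont : Continuous (qf (K := K) (d := d)) := by
  unfold qf
  exact continuous_finset_sum _ fun k _ => continuous_finset_sum _ fun j _ =>
    (((continuous_apply j).comp (continuous_apply k)).pow 2).div_const 2

noncomputable def wt (T lam : ℝ) (p : ℝ × (Fin K → Fin d → ℝ)) : ℝ :=
  Real.exp (lam * tcl T p.1 + qf p.2)

lemma wt_cont (T lam : ℝ) : Continuous (wt (K := K) (d := d) T lam) :=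
  Real.continuous_exp.comp
    ((continuous_const.mul ((tcl_cont T).comp continuous_fst)).add
      (qf_cont.comp continuous_snd))

lemma wt_pos (T lam : ℝ) (p : ℝ × (Fin K → Fin d → ℝ)) : 0 < wt T lam p := Real.exp_pos _

lemma sigmaCoef_eq {σ : ℝ → Fin d → ℝ} {ξ : ℝ → Fin K → ℝ} (hσ : Continuous σ)
    (hξ : Continuous ξ) (i : Fin d) (k : Fin K) (r t : ℝ) :
    SigmaCoef σ ξ i k r t
      = (∫ s in (0:ℝ)..t, σ s i * ξ s k) - ∫ s in (0:ℝ)..r, σ s i * ξ s k := by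
  have hc : Continuous fun s => σ s i * ξ s k :=
    ((continuous_apply i).comp hσ).mul ((continuous_apply k).comp hξ)
  exact (intervalIntegral.integral_interval_sub_left (hc.intervalIntegrable 0 t)
    (hc.intervalIntegrable 0 r)).symm

lemma sigmaCoef_comp_cont {σ : ℝ → Fin d → ℝ} {ξ : ℝ → Fin K → ℝ} (hσ : Continuous σ)
    (hξ : Continuous ξ) (i : Fin d) (k : Fin K) {α : Type*} [TopologicalSpace α]
    {f g : α → ℝ} (hf : Continuous f) (hg : Continuous g) :
    Continuous fun a => SigmaCoef σ ξ i k (f a) (g a) := by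
  have hc : Continuous fun s => σ s i * ξ s k :=
    ((continuous_apply i).comp hσ).mul ((continuous_apply k).comp hξ)
  have hP : Continuous fun t : ℝ => ∫ s in (0:ℝ)..t, σ s i * ξ s k :=
    intervalIntegral.continuous_primitive (fun a b => hc.intervalIntegrable a b) 0
  simp only [sigmaCoef_eq hσ hξ]
  exact (hP.comp hg).sub (hP.comp hf)

lemma sum_le_qf (σ : ℝ → Fin d → ℝ) (ξ : ℝ → Fin K → ℝ) (i : Fin d)
    (x : Fin K → Fin d → ℝ) (r t : ℝ) :
    ∑ k, (x k i * SigmaCoef σ ξ i k r t - SigmaCoef σ ξ i k r t ^ 2 / 2) ≤ qf x := by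
  unfold qf
  refine Finset.sum_le_sum fun k _ => ?_
  have h1 : x k i * SigmaCoef σ ξ i k r t - SigmaCoef σ ξ i k r t ^ 2 / 2
      ≤ x k i ^ 2 / 2 := by nlinarith [sq_nonneg (x k i - SigmaCoef σ ξ i k r t)]
  refine h1.trans ?_
  exact Finset.single_le_sum (f := fun j => x k j ^ 2 / 2)
    (fun j _ => by positivity) (Finset.mem_univ i)

lemma qf_shift (σ : ℝ → Fin d → ℝ) (ξ : ℝ → Fin K → ℝ) (i : Fin d)
    (x : Fin K → Fin d → ℝ) (r t : ℝ) :
    qf (x - SigmaMat σ ξ i r t)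
      + ∑ k, (x k i * SigmaCoef σ ξ i k r t - SigmaCoef σ ξ i k r t ^ 2 / 2) = qf x := by
  unfold qf SigmaMat
  rw [← Finset.sum_add_distrib]
  refine Finset.sum_congr rfl fun k _ => ?_
  have hrow : ∀ j : Fin d, ((x - fun k j => if j = i then SigmaCoef σ ξ i k r t else 0) k j) ^ 2 / 2
      = x k j ^ 2 / 2 + (if j = i then
          (SigmaCoef σ ξ i k r t ^ 2 / 2 - x k i * SigmaCoef σ ξ i k r t) else 0) := by
    intro j
    by_cases hj : j = i
    · subst hj
      simp only [Pi.sub_apply, eq_self_iff_true]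
      rw [if_pos trivial, if_pos trivial]
      ring
    · simp [Pi.sub_apply, hj]
  calc (∑ j, ((x - fun k j => if j = i then SigmaCoef σ ξ i k r t else 0) k j) ^ 2 / 2)
        + (x k i * SigmaCoef σ ξ i k r t - SigmaCoef σ ξ i k r t ^ 2 / 2)
      = (∑ j, (x k j ^ 2 / 2 + (if j = i then
          (SigmaCoef σ ξ i k r t ^ 2 / 2 - x k i * SigmaCoef σ ξ i k r t) else 0)))
        + (x k i * SigmaCoef σ ξ i k r t - SigmaCoef σ ξ i k r t ^ 2 / 2) := by
        rw [Finset.sum_congr rfl fun j _ => hrow j]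
    _ = ∑ j, x k j ^ 2 / 2 := by
        rw [Finset.sum_add_distrib, Finset.sum_ite_eq' Finset.univ i]
        simp; ring

end WZAux

namespace WZAux

variable {K d : ℕ}

/-- The shifted evaluation point. -/
noncomputable def shiftPt (σ : ℝ → Fin d → ℝ) (ξ : ℝ → Fin K → ℝ) (T : ℝ) (i : Fin d)
    (p : ℝ × (Fin K → Fin d → ℝ)) (s : ℝ) : ℝ × (Fin K → Fin d → ℝ) :=
  (s, p.2 - SigmaMat σ ξ i s (tcl T p.1))

/-- The integrand of the fixed-point map. -/
noncomputable def integrand (T lam : ℝ) (b : ℝ → (Fin d → ℝ) → (Fin d → ℝ))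
    (σ : ℝ → Fin d → ℝ) (ξ : ℝ → Fin K → ℝ)
    (v : ℝ × (Fin K → Fin d → ℝ) → (Fin d → ℝ)) (i : Fin d)
    (p : ℝ × (Fin K → Fin d → ℝ)) (s : ℝ) : ℝ :=
  b s (fun j => wt T lam (shiftPt σ ξ T i p s) * v (shiftPt σ ξ T i p s) j) i *
    Real.exp (∑ k, (p.2 k i * SigmaCoef σ ξ i k s (tcl T p.1)
      - SigmaCoef σ ξ i k s (tcl T p.1) ^ 2 / 2))

/-- The fixed-point map (weighted form). -/
noncomputable def gmap (T lam : ℝ) (c : Fin d → ℝ) (b : ℝ → (Fin d → ℝ) → (Fin d → ℝ))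
    (σ : ℝ → Fin d → ℝ) (ξ : ℝ → Fin K → ℝ)
    (v : ℝ × (Fin K → Fin d → ℝ) → (Fin d → ℝ))
    (p : ℝ × (Fin K → Fin d → ℝ)) (i : Fin d) : ℝ :=
  (wt T lam p)⁻¹ * (c i * Real.exp (∑ k, (p.2 k i * SigmaCoef σ ξ i k 0 (tcl T p.1)
        - SigmaCoef σ ξ i k 0 (tcl T p.1) ^ 2 / 2))
    + ∫ s in (0:ℝ)..(tcl T p.1), integrand T lam b σ ξ v i p s)

variable {T lam : ℝ} {b : ℝ → (Fin d → ℝ) → (Fin d → ℝ)} {σ : ℝ → Fin d → ℝ}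
  {ξ : ℝ → Fin K → ℝ} {v : ℝ × (Fin K → Fin d → ℝ) → (Fin d → ℝ)}

lemma shiftPt_cont (hσ : Continuous σ) (hξ : Continuous ξ) (i : Fin d) :
    Continuous fun ps : (ℝ × (Fin K → Fin d → ℝ)) × ℝ => shiftPt σ ξ T i ps.1 ps.2 := by
  have hmat : Continuous fun ps : (ℝ × (Fin K → Fin d → ℝ)) × ℝ =>
      SigmaMat σ ξ i ps.2 (tcl T ps.1.1) := by
    refine continuous_pi fun k => continuous_pi fun j => ?_
    show Continuous fun ps : (ℝ × (Fin K → Fin d → ℝ)) × ℝ =>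
      if j = i then SigmaCoef σ ξ i k ps.2 (tcl T ps.1.1) else 0
    split_ifs
    · exact sigmaCoef_comp_cont hσ hξ i k continuous_snd
        ((tcl_cont T).comp (continuous_fst.comp continuous_fst))
    · exact continuous_const
  exact continuous_snd.prodMk ((continuous_snd.comp continuous_fst).sub hmat)

lemma expsum_cont (hσ : Continuous σ) (hξ : Continuous ξ) (i : Fin d)
    {α : Type*} [TopologicalSpace α] {x : α → Fin K → Fin d → ℝ} {f g : α → ℝ}
    (hx : Continuous x) (hf : Continuous f) (hg : Continuous g) :
    Continuous fun a => Real.exp (∑ k, (x a k i * SigmaCoef σ ξ i k (f a) (g a)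
      - SigmaCoef σ ξ i k (f a) (g a) ^ 2 / 2)) := by
  refine Real.continuous_exp.comp (continuous_finset_sum _ fun k _ => ?_)
  have hS : Continuous fun a => SigmaCoef σ ξ i k (f a) (g a) :=
    sigmaCoef_comp_cont hσ hξ i k hf hg
  exact (((continuous_apply i).comp ((continuous_apply k).comp hx)).mul hS).sub
    ((hS.pow 2).div_const 2)

lemma integrand_cont (hb_cont : Continuous fun p : ℝ × (Fin d → ℝ) => b p.1 p.2)
    (hσ : Continuous σ) (hξ : Continuous ξ) (hv : Continuous v) (i : Fin d) :
    Continuous (Function.uncurry (integrand T lam b σ ξ v i)) := by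
  have hsh := shiftPt_cont (T := T) hσ hξ i
  have hvec : Continuous fun ps : (ℝ × (Fin K → Fin d → ℝ)) × ℝ =>
      (fun j => wt T lam (shiftPt σ ξ T i ps.1 ps.2) * v (shiftPt σ ξ T i ps.1 ps.2) j) :=
    continuous_pi fun j => ((wt_cont T lam).comp hsh).mul
      ((continuous_apply j).comp (hv.comp hsh))
  have hbp : Continuous fun ps : (ℝ × (Fin K → Fin d → ℝ)) × ℝ =>
      b ps.2 (fun j => wt T lam (shiftPt σ ξ T i ps.1 ps.2)
        * v (shiftPt σ ξ T i ps.1 ps.2) j) i :=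
    (continuous_apply i).comp (hb_cont.comp (continuous_snd.prodMk hvec))
  exact hbp.mul (expsum_cont hσ hξ i (continuous_snd.comp continuous_fst)
    continuous_snd ((tcl_cont T).comp (continuous_fst.comp continuous_fst)))

lemma integrand_intable (hb_cont : Continuous fun p : ℝ × (Fin d → ℝ) => b p.1 p.2)
    (hσ : Continuous σ) (hξ : Continuous ξ) (hv : Continuous v) (i : Fin d)
    (p : ℝ × (Fin K → Fin d → ℝ)) (r u : ℝ) :
    IntervalIntegrable (integrand T lam b σ ξ v i p) volume r u := by
  have : Continuous (integrand T lam b σ ξ v i p) :=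
    (integrand_cont hb_cont hσ hξ hv i).comp (Continuous.prodMk_right p)
  exact this.intervalIntegrable r u

lemma gmap_cont (hb_cont : Continuous fun p : ℝ × (Fin d → ℝ) => b p.1 p.2)
    (hσ : Continuous σ) (hξ : Continuous ξ) (hv : Continuous v) (c : Fin d → ℝ) :
    Continuous (gmap T lam c b σ ξ v) := by
  refine continuous_pi fun i => ?_
  refine Continuous.mul ((wt_cont T lam).inv₀ fun p => (wt_pos T lam p).ne') ?_
  refine Continuous.add ?_ ?_
  · exact continuous_const.mul (expsum_cont hσ hξ i continuous_snd continuous_const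
      ((tcl_cont T).comp continuous_fst))
  · exact intervalIntegral.continuous_parametric_intervalIntegral_of_continuous
      (integrand_cont hb_cont hσ hξ hv i) ((tcl_cont T).comp continuous_fst)

end WZAux

open WZAux in
/-- **Existence for the mild form of the Wong–Zakai approximating equation.**
For bounded continuous `b`, Lipschitz in the space variable uniformly in time, and
bounded continuous `σ, ξ`, there is a continuous `u` satisfying the mild equation. -/
theorem mild_solution_exists (T : ℝ) (hT : 0 < T) (K d : ℕ) (hK : 1 ≤ K) (hd : 1 ≤ d)
    (c : Fin d → ℝ)
    (b : ℝ → (Fin d → ℝ) → (Fin d → ℝ))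
    (hb_cont : Continuous fun p : ℝ × (Fin d → ℝ) => b p.1 p.2)
    (M : ℝ) (hb_bdd : ∀ t ∈ Set.Icc (0:ℝ) T, ∀ x : Fin d → ℝ, ∀ i : Fin d, |b t x i| ≤ M)
    (L : NNReal) (hb_lip : ∀ t ∈ Set.Icc (0:ℝ) T, LipschitzWith L (b t))
    (σ : ℝ → Fin d → ℝ) (hσ : Continuous σ)
    (Sb : ℝ) (hσ_bdd : ∀ t ∈ Set.Icc (0:ℝ) T, ∀ i : Fin d, |σ t i| ≤ Sb)
    (ξ : ℝ → Fin K → ℝ) (hξ : Continuous ξ)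
    (Xb : ℝ) (hξ_bdd : ∀ t ∈ Set.Icc (0:ℝ) T, ∀ k : Fin K, |ξ t k| ≤ Xb) :
    ∃ u : ℝ × (Fin K → Fin d → ℝ) → (Fin d → ℝ),
      Continuous u ∧
      ∀ i : Fin d, ∀ t ∈ Set.Icc (0:ℝ) T, ∀ x : Fin K → Fin d → ℝ,
        u (t, x) i
          = c i * Real.exp (∑ k, (x k i * SigmaCoef σ ξ i k 0 t
                - SigmaCoef σ ξ i k 0 t ^ 2 / 2))
            + ∫ s in (0:ℝ)..t,
                b s (u (s, x - SigmaMat σ ξ i s t)) i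
                  * Real.exp (∑ k, (x k i * SigmaCoef σ ξ i k s t
                      - SigmaCoef σ ξ i k s t ^ 2 / 2)) := by
  classical
  set lam : ℝ := 2 * ((L : ℝ) + 1) with hlam_def
  have hlam_pos : 0 < lam := by positivity
  have hT0 : (0:ℝ) ≤ T := hT.le
  have hM0 : 0 ≤ M :=
    (abs_nonneg _).trans (hb_bdd 0 ⟨le_refl 0, hT0⟩ 0 ⟨0, hd⟩)
  set C : ℝ := ‖c‖ + T * M with hC_def
  have hC0 : 0 ≤ C := add_nonneg (norm_nonneg c) (mul_nonneg hT0 hM0)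
  -- the Banach space of bounded continuous functions
  -- bound for the fixed point map
  have hGb : ∀ (v : ℝ × (Fin K → Fin d → ℝ) → (Fin d → ℝ)), Continuous v →
      ∀ p i, |gmap T lam c b σ ξ v p i| ≤ C := by
    intro v hv p i
    obtain ⟨ha0, haT⟩ := tcl_mem hT0 p.1
    have hint : Continuous (integrand T lam b σ ξ v i p) :=
      (integrand_cont hb_cont hσ hξ hv i).comp (Continuous.prodMk_right p)
    have hIb : |∫ s in (0:ℝ)..(tcl T p.1), integrand T lam b σ ξ v i p s|
        ≤ T * M * Real.exp (qf p.2) := by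
      have h1 := intervalIntegral.abs_integral_le_integral_abs
        (f := integrand T lam b σ ξ v i p) (μ := volume) (a := 0) (b := tcl T p.1) ha0
      have h2 : (∫ s in (0:ℝ)..(tcl T p.1), |integrand T lam b σ ξ v i p s|)
          ≤ ∫ s in (0:ℝ)..(tcl T p.1), M * Real.exp (qf p.2) := by
        refine intervalIntegral.integral_mono_on ha0 (hint.abs.intervalIntegrable _ _)
          (intervalIntegrable_const) fun s hs => ?_
        have hsT : s ∈ Set.Icc (0:ℝ) T := ⟨hs.1, hs.2.trans haT⟩
        rw [integrand, abs_mul, Real.abs_exp]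
        exact mul_le_mul (hb_bdd s hsT _ i)
          (Real.exp_le_exp.2 (sum_le_qf σ ξ i p.2 s (tcl T p.1)))
          (Real.exp_pos _).le hM0
      have h3 : (∫ _s in (0:ℝ)..(tcl T p.1), M * Real.exp (qf p.2))
          = tcl T p.1 * (M * Real.exp (qf p.2)) := by
        simp [intervalIntegral.integral_const]; ring
      calc |∫ s in (0:ℝ)..(tcl T p.1), integrand T lam b σ ξ v i p s|
          ≤ tcl T p.1 * (M * Real.exp (qf p.2)) := by rw [← h3]; exact h1.trans h2
        _ ≤ T * (M * Real.exp (qf p.2)) := by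
            refine mul_le_mul_of_nonneg_right haT (by positivity)
        _ = T * M * Real.exp (qf p.2) := by ring
    have hwle : (wt T lam p)⁻¹ * Real.exp (qf p.2) ≤ 1 := by
      rw [wt, ← Real.exp_neg, ← Real.exp_add]
      rw [Real.exp_le_one_iff]
      nlinarith [mul_nonneg hlam_pos.le ha0]
    have habs : |gmap T lam c b σ ξ v p i|
        ≤ (wt T lam p)⁻¹ * ((|c i| + T * M) * Real.exp (qf p.2)) := by
      rw [gmap, abs_mul, abs_of_pos (inv_pos.2 (wt_pos T lam p))]
      refine mul_le_mul_of_nonneg_left ?_ (inv_pos.2 (wt_pos T lam p)).le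
      calc |c i * Real.exp (∑ k, (p.2 k i * SigmaCoef σ ξ i k 0 (tcl T p.1)
              - SigmaCoef σ ξ i k 0 (tcl T p.1) ^ 2 / 2))
            + ∫ s in (0:ℝ)..(tcl T p.1), integrand T lam b σ ξ v i p s|
          ≤ |c i| * Real.exp (∑ k, (p.2 k i * SigmaCoef σ ξ i k 0 (tcl T p.1)
              - SigmaCoef σ ξ i k 0 (tcl T p.1) ^ 2 / 2))
            + |∫ s in (0:ℝ)..(tcl T p.1), integrand T lam b σ ξ v i p s| := by
              refine (abs_add_le _ _).trans ?_
              rw [abs_mul, Real.abs_exp]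
        _ ≤ |c i| * Real.exp (qf p.2) + T * M * Real.exp (qf p.2) := by
              refine add_le_add ?_ hIb
              exact mul_le_mul_of_nonneg_left
                (Real.exp_le_exp.2 (sum_le_qf σ ξ i p.2 0 (tcl T p.1))) (abs_nonneg _)
        _ = (|c i| + T * M) * Real.exp (qf p.2) := by ring
    refine habs.trans ?_
    calc (wt T lam p)⁻¹ * ((|c i| + T * M) * Real.exp (qf p.2))
        = (|c i| + T * M) * ((wt T lam p)⁻¹ * Real.exp (qf p.2)) := by ring
      _ ≤ (|c i| + T * M) * 1 := by
          refine mul_le_mul_of_nonneg_left hwle ?_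
          have := abs_nonneg (c i); positivity
      _ ≤ C := by
          rw [mul_one, hC_def]
          have : |c i| ≤ ‖c‖ := by
            simpa [Real.norm_eq_abs] using norm_le_pi_norm c i
          linarith
  -- the fixed point map on the space of bounded continuous functions
  set F : BoundedContinuousFunction (ℝ × (Fin K → Fin d → ℝ)) (Fin d → ℝ) →
      BoundedContinuousFunction (ℝ × (Fin K → Fin d → ℝ)) (Fin d → ℝ) :=
    fun v => BoundedContinuousFunction.ofNormedAddCommGroup (gmap T lam c b σ ξ ⇑v)
      (gmap_cont hb_cont hσ hξ v.continuous c) C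
      (fun p => (pi_norm_le_iff_of_nonneg hC0).2 fun i => by
        rw [Real.norm_eq_abs]; exact hGb (⇑v) v.continuous p i) with hF_def
  have hcontr : ∀ v w, dist (F v) (F w) ≤ 2⁻¹ * dist v w := by
    intro v w
    have hD0 : (0:ℝ) ≤ dist v w := dist_nonneg
    rw [BoundedContinuousFunction.dist_le (by positivity)]
    intro p
    rw [dist_pi_le_iff (by positivity)]
    intro i
    obtain ⟨ha0, haT⟩ := tcl_mem hT0 p.1
    have hintv : Continuous (integrand T lam b σ ξ (⇑v) i p) :=
      (integrand_cont hb_cont hσ hξ v.continuous i).comp (Continuous.prodMk_right p)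
    have hintw : Continuous (integrand T lam b σ ξ (⇑w) i p) :=
      (integrand_cont hb_cont hσ hξ w.continuous i).comp (Continuous.prodMk_right p)
    have hpt : ∀ s ∈ Set.Icc (0:ℝ) (tcl T p.1),
        |integrand T lam b σ ξ (⇑v) i p s - integrand T lam b σ ξ (⇑w) i p s|
          ≤ (L:ℝ) * dist v w * Real.exp (lam * s + qf p.2) := by
      intro s hs
      have hsT : s ∈ Set.Icc (0:ℝ) T := ⟨hs.1, hs.2.trans haT⟩
      have hwy := wt_pos T lam (shiftPt σ ξ T i p s)
      have hdistU : dist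
          (fun j => wt T lam (shiftPt σ ξ T i p s) * v (shiftPt σ ξ T i p s) j)
          (fun j => wt T lam (shiftPt σ ξ T i p s) * w (shiftPt σ ξ T i p s) j)
          ≤ wt T lam (shiftPt σ ξ T i p s) * dist v w := by
        rw [dist_pi_le_iff (by positivity)]
        intro j
        rw [Real.dist_eq, ← mul_sub, abs_mul, abs_of_pos hwy]
        refine mul_le_mul_of_nonneg_left ?_ hwy.le
        calc |v (shiftPt σ ξ T i p s) j - w (shiftPt σ ξ T i p s) j|
            = dist (v (shiftPt σ ξ T i p s) j) (w (shiftPt σ ξ T i p s) j) :=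
              (Real.dist_eq _ _).symm
          _ ≤ dist (v (shiftPt σ ξ T i p s)) (w (shiftPt σ ξ T i p s)) :=
              dist_le_pi_dist _ _ j
          _ ≤ dist v w := BoundedContinuousFunction.dist_coe_le_dist _
      have h1 : |b s (fun j => wt T lam (shiftPt σ ξ T i p s) * v (shiftPt σ ξ T i p s) j) i
            - b s (fun j => wt T lam (shiftPt σ ξ T i p s) * w (shiftPt σ ξ T i p s) j) i|
          ≤ (L:ℝ) * (wt T lam (shiftPt σ ξ T i p s) * dist v w) := by
        calc |b s (fun j => wt T lam (shiftPt σ ξ T i p s) * v (shiftPt σ ξ T i p s) j) i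
              - b s (fun j => wt T lam (shiftPt σ ξ T i p s) * w (shiftPt σ ξ T i p s) j) i|
            = dist (b s (fun j => wt T lam (shiftPt σ ξ T i p s) * v (shiftPt σ ξ T i p s) j) i)
                (b s (fun j => wt T lam (shiftPt σ ξ T i p s) * w (shiftPt σ ξ T i p s) j) i) :=
              (Real.dist_eq _ _).symm
          _ ≤ dist (b s (fun j => wt T lam (shiftPt σ ξ T i p s) * v (shiftPt σ ξ T i p s) j))
                (b s (fun j => wt T lam (shiftPt σ ξ T i p s) * w (shiftPt σ ξ T i p s) j)) :=
              dist_le_pi_dist _ _ i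
          _ ≤ (L:ℝ) * dist
                (fun j => wt T lam (shiftPt σ ξ T i p s) * v (shiftPt σ ξ T i p s) j)
                (fun j => wt T lam (shiftPt σ ξ T i p s) * w (shiftPt σ ξ T i p s) j) :=
              (hb_lip s hsT).dist_le_mul _ _
          _ ≤ (L:ℝ) * (wt T lam (shiftPt σ ξ T i p s) * dist v w) :=
              mul_le_mul_of_nonneg_left hdistU L.coe_nonneg
      have hkey : wt T lam (shiftPt σ ξ T i p s)
            * Real.exp (∑ k, (p.2 k i * SigmaCoef σ ξ i k s (tcl T p.1)
                - SigmaCoef σ ξ i k s (tcl T p.1) ^ 2 / 2))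
          = Real.exp (lam * s + qf p.2) := by
        rw [wt, ← Real.exp_add]
        congr 1
        simp only [shiftPt]
        rw [tcl_eq hsT]
        have h := qf_shift σ ξ i p.2 s (tcl T p.1)
        linarith
      rw [integrand, integrand, ← sub_mul, abs_mul, Real.abs_exp]
      calc |b s (fun j => wt T lam (shiftPt σ ξ T i p s) * v (shiftPt σ ξ T i p s) j) i
            - b s (fun j => wt T lam (shiftPt σ ξ T i p s) * w (shiftPt σ ξ T i p s) j) i|
            * Real.exp (∑ k, (p.2 k i * SigmaCoef σ ξ i k s (tcl T p.1)
                - SigmaCoef σ ξ i k s (tcl T p.1) ^ 2 / 2))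
          ≤ ((L:ℝ) * (wt T lam (shiftPt σ ξ T i p s) * dist v w))
            * Real.exp (∑ k, (p.2 k i * SigmaCoef σ ξ i k s (tcl T p.1)
                - SigmaCoef σ ξ i k s (tcl T p.1) ^ 2 / 2)) :=
            mul_le_mul_of_nonneg_right h1 (Real.exp_pos _).le
        _ = (L:ℝ) * dist v w * (wt T lam (shiftPt σ ξ T i p s)
            * Real.exp (∑ k, (p.2 k i * SigmaCoef σ ξ i k s (tcl T p.1)
                - SigmaCoef σ ξ i k s (tcl T p.1) ^ 2 / 2))) := by ring
        _ = (L:ℝ) * dist v w * Real.exp (lam * s + qf p.2) := by rw [hkey]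
    have hIexp : (∫ s in (0:ℝ)..(tcl T p.1), Real.exp (lam * s))
        = lam⁻¹ * (Real.exp (lam * tcl T p.1) - 1) := by
      rw [intervalIntegral.integral_comp_mul_left (f := Real.exp) hlam_pos.ne']
      simp [integral_exp]
    have hdiffeq : gmap T lam c b σ ξ (⇑v) p i - gmap T lam c b σ ξ (⇑w) p i
        = (wt T lam p)⁻¹ * ∫ s in (0:ℝ)..(tcl T p.1),
            (integrand T lam b σ ξ (⇑v) i p s - integrand T lam b σ ξ (⇑w) i p s) := by
      rw [gmap, gmap, ← mul_sub, add_sub_add_left_eq_sub,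
        ← intervalIntegral.integral_sub (hintv.intervalIntegrable _ _)
          (hintw.intervalIntegrable _ _)]
    have h2 : |∫ s in (0:ℝ)..(tcl T p.1),
          (integrand T lam b σ ξ (⇑v) i p s - integrand T lam b σ ξ (⇑w) i p s)|
        ≤ ∫ s in (0:ℝ)..(tcl T p.1), (L:ℝ) * dist v w * Real.exp (lam * s + qf p.2) := by
      refine (intervalIntegral.abs_integral_le_integral_abs ha0).trans ?_
      have hce : Continuous fun s : ℝ => (L:ℝ) * dist v w * Real.exp (lam * s + qf p.2) :=
        continuous_const.mul (Real.continuous_exp.comp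
          ((continuous_const.mul continuous_id).add continuous_const))
      refine intervalIntegral.integral_mono_on ha0
        ((hintv.sub hintw).abs.intervalIntegrable _ _)
        (hce.intervalIntegrable _ _) hpt
    have h3 : (∫ s in (0:ℝ)..(tcl T p.1), (L:ℝ) * dist v w * Real.exp (lam * s + qf p.2))
        = (L:ℝ) * dist v w * Real.exp (qf p.2)
          * (lam⁻¹ * (Real.exp (lam * tcl T p.1) - 1)) := by
      have hrw : ∀ s : ℝ, (L:ℝ) * dist v w * Real.exp (lam * s + qf p.2)
          = ((L:ℝ) * dist v w * Real.exp (qf p.2)) * Real.exp (lam * s) := fun s => by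
        rw [Real.exp_add]; ring
      simp_rw [hrw]
      rw [intervalIntegral.integral_const_mul, hIexp]
    have hA1 : 1 ≤ Real.exp (lam * tcl T p.1) :=
      Real.one_le_exp (by positivity)
    have hApos := Real.exp_pos (lam * tcl T p.1)
    have hQpos := Real.exp_pos (qf p.2)
    have hnum : (wt T lam p)⁻¹ * ((L:ℝ) * dist v w * Real.exp (qf p.2)
          * (lam⁻¹ * (Real.exp (lam * tcl T p.1) - 1)))
        ≤ 2⁻¹ * dist v w := by
      rw [wt, Real.exp_add]
      have heq : (Real.exp (lam * tcl T p.1) * Real.exp (qf p.2))⁻¹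
            * ((L:ℝ) * dist v w * Real.exp (qf p.2)
              * (lam⁻¹ * (Real.exp (lam * tcl T p.1) - 1)))
          = (L:ℝ) * dist v w * lam⁻¹
            * ((Real.exp (lam * tcl T p.1) - 1) / Real.exp (lam * tcl T p.1)) := by
        field_simp
      rw [heq]
      have hfrac : (Real.exp (lam * tcl T p.1) - 1) / Real.exp (lam * tcl T p.1) ≤ 1 :=
        (div_le_one hApos).2 (by linarith)
      have hLl : (L:ℝ) * lam⁻¹ ≤ 2⁻¹ := by
        rw [hlam_def, inv_eq_one_div, mul_one_div, div_le_iff₀ (by positivity)]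
        have := L.coe_nonneg
        nlinarith
      calc (L:ℝ) * dist v w * lam⁻¹
            * ((Real.exp (lam * tcl T p.1) - 1) / Real.exp (lam * tcl T p.1))
          ≤ (L:ℝ) * dist v w * lam⁻¹ * 1 := by
            refine mul_le_mul_of_nonneg_left hfrac ?_
            have := L.coe_nonneg
            positivity
        _ = ((L:ℝ) * lam⁻¹) * dist v w := by ring
        _ ≤ 2⁻¹ * dist v w := mul_le_mul_of_nonneg_right hLl hD0
    rw [Real.dist_eq]
    show |gmap T lam c b σ ξ (⇑v) p i - gmap T lam c b σ ξ (⇑w) p i| ≤ 2⁻¹ * dist v w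
    rw [hdiffeq, abs_mul, abs_of_pos (inv_pos.2 (wt_pos T lam p))]
    refine le_trans ?_ hnum
    refine mul_le_mul_of_nonneg_left ?_ (inv_pos.2 (wt_pos T lam p)).le
    exact h2.trans (le_of_eq h3)
  have hF : ContractingWith 2⁻¹ F := by
    constructor
    · rw [← NNReal.coe_lt_coe]; norm_num
    · refine LipschitzWith.of_dist_le_mul fun v w => ?_
      simpa using hcontr v w
  set vstar := ContractingWith.fixedPoint F hF with hvstar
  have hfix : F vstar = vstar := hF.fixedPoint_isFixedPt
  refine ⟨fun p => fun j => wt T lam p * vstar p j, ?_, ?_⟩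
  · exact continuous_pi fun j => (wt_cont T lam).mul
      ((continuous_apply j).comp vstar.continuous)
  · intro i t ht x
    have htc : tcl T t = t := tcl_eq ht
    have hcoe : gmap T lam c b σ ξ (⇑vstar) (t, x) = vstar (t, x) :=
      congrFun (congrArg DFunLike.coe hfix) (t, x)
    show wt T lam (t, x) * vstar (t, x) i = _
    rw [← hcoe, gmap, ← mul_assoc, mul_inv_cancel₀ (wt_pos T lam (t, x)).ne', one_mul]
    simp only [integrand, shiftPt]
    rw [htc]
end

section
/- Let V ≥ 0, let X and X_n (n ≥ 1) be real random variables on a common probability space such that for each n the pair (X_n, X) has a centered Gaussian joint law on ℝ², with variances v_n := E[X_n²] ≤ V and v := E[X²] ≤ V, and suppose E[(X_n − X)²] → 0 as n → ∞. Then for every p ≥ 1, exp(X_n − v_n/2) converges to exp(X − v/2) in L^p, i.e. E[ |exp(X_n − v_n/2) − exp(X − v/2)|^p ] → 0 as n → ∞. -/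
open MeasureTheory ProbabilityTheory Filter

section Helpers

open Real
open scoped NNReal ENNReal


lemma myIntegrable_sq_exp {b : ℝ} (hb : 0 < b) :
    Integrable (fun x : ℝ => x ^ 2 * Real.exp (-b * x ^ 2)) := by
  have h := integrable_rpow_mul_exp_neg_mul_sq hb (s := 2) (by norm_num)
  have e : (fun x : ℝ => x ^ (2:ℝ) * Real.exp (-b * x ^ 2))
      = fun x : ℝ => x ^ 2 * Real.exp (-b * x ^ 2) := funext fun x => by rw [Real.rpow_two]
  exact e ▸ h

lemma myTendsto_mul_exp_atTop {b : ℝ} (hb : 0 < b) :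
    Tendsto (fun x : ℝ => x * Real.exp (-b * x ^ 2)) atTop (nhds 0) := by
  have h := rpow_mul_exp_neg_mul_sq_isLittleO_exp_neg hb 1
  have h2 : Tendsto (fun x : ℝ => Real.exp (-(1 / 2) * x)) atTop (nhds 0) := by
    rw [Real.tendsto_exp_comp_nhds_zero]
    have : Tendsto (fun x : ℝ => (1/2 : ℝ) * x) atTop atTop :=
      Tendsto.const_mul_atTop (by norm_num) tendsto_id
    have := tendsto_neg_atTop_atBot.comp this
    refine this.congr fun x => by simp only [Function.comp_apply]; ring
  have h3 := h.trans_tendsto h2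
  refine h3.congr fun x => by rw [Real.rpow_one]

lemma myTendsto_mul_exp_atBot {b : ℝ} (hb : 0 < b) :
    Tendsto (fun x : ℝ => x * Real.exp (-b * x ^ 2)) atBot (nhds 0) := by
  have h := (myTendsto_mul_exp_atTop hb).comp tendsto_neg_atBot_atTop
  have h2 := h.neg
  rw [neg_zero] at h2
  refine h2.congr fun x => ?_
  simp only [Function.comp]
  ring_nf

lemma myIntegral_sq_mul_exp {b : ℝ} (hb : 0 < b) :
    ∫ x : ℝ, x ^ 2 * Real.exp (-b * x ^ 2) = Real.sqrt (π / b) / (2 * b) := by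
  set g : ℝ → ℝ := fun x => x * Real.exp (-b * x ^ 2) with hg
  set φ : ℝ → ℝ := fun x => Real.exp (-b * x ^ 2) - 2 * b * (x ^ 2 * Real.exp (-b * x ^ 2)) with hφ
  have hderiv : ∀ x : ℝ, HasDerivAt g (φ x) x := by
    intro x
    have h1 : HasDerivAt (fun x : ℝ => -b * x ^ 2) (-b * (2 * x ^ 1)) x :=
      (hasDerivAt_pow 2 x).const_mul (-b)
    have h2 := h1.exp
    have h3 := (hasDerivAt_id x).mul h2
    refine (h3 : HasDerivAt g _ x).congr_deriv ?_
    simp only [hφ, id]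
    ring
  have hIntφ : Integrable φ :=
    (integrable_exp_neg_mul_sq hb).sub ((myIntegrable_sq_exp hb).const_mul (2 * b))
  have hIoi : ∫ x in Set.Ioi (0:ℝ), φ x = 0 - g 0 :=
    MeasureTheory.integral_Ioi_of_hasDerivAt_of_tendsto' (fun x _ => hderiv x)
      hIntφ.integrableOn (myTendsto_mul_exp_atTop hb)
  have hIic : ∫ x in Set.Iic (0:ℝ), φ x = g 0 - 0 :=
    MeasureTheory.integral_Iic_of_hasDerivAt_of_tendsto' (fun x _ => hderiv x)
      hIntφ.integrableOn (myTendsto_mul_exp_atBot hb)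
  have hg0 : g 0 = 0 := by simp [hg]
  have hφ0 : ∫ x : ℝ, φ x = 0 := by
    rw [← intervalIntegral.integral_Iic_add_Ioi (hIntφ.integrableOn) (hIntφ.integrableOn),
      hIoi, hIic, hg0]
    ring
  have hexp : ∫ x : ℝ, Real.exp (-b * x ^ 2) = Real.sqrt (π / b) := integral_gaussian b
  have hsplit : (fun x : ℝ => x ^ 2 * Real.exp (-b * x ^ 2))
      = fun x => (2 * b)⁻¹ * (Real.exp (-b * x ^ 2) - φ x) := by
    funext x
    simp only [hφ]
    field_simp
    ring
  rw [hsplit, MeasureTheory.integral_const_mul,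
    MeasureTheory.integral_sub (integrable_exp_neg_mul_sq hb) hIntφ, hφ0, hexp]
  ring


lemma myPdf_second_moment {w : ℝ≥0} (hw : w ≠ 0) :
    ∫ x : ℝ, x ^ 2 * gaussianPDFReal 0 w x = (w : ℝ) := by
  have hw' : (0:ℝ) < (w:ℝ) := by positivity
  have hb : (0:ℝ) < (2 * (w:ℝ))⁻¹ := by positivity
  have harg : ∀ x : ℝ, -(x - 0) ^ 2 / (2 * (w:ℝ)) = -(2 * (w:ℝ))⁻¹ * x ^ 2 := by
    intro x; field_simp; ring
  have h1 : (fun x : ℝ => x ^ 2 * gaussianPDFReal 0 w x)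
      = fun x : ℝ => (Real.sqrt (2 * π * (w:ℝ)))⁻¹ *
        (x ^ 2 * Real.exp (-(2 * (w:ℝ))⁻¹ * x ^ 2)) := by
    funext x
    simp only [gaussianPDFReal, harg x]
    ring
  rw [h1, MeasureTheory.integral_const_mul, myIntegral_sq_mul_exp hb]
  have h2 : π / (2 * (w:ℝ))⁻¹ = 2 * π * (w:ℝ) := by field_simp
  have h3 : (2 : ℝ) * (2 * (w:ℝ))⁻¹ = ((w:ℝ))⁻¹ := by field_simp
  rw [h2, h3]
  have h4 : Real.sqrt (2 * π * (w:ℝ)) ≠ 0 := by positivity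
  field_simp

lemma myPdf_exp {w : ℝ≥0} (hw : w ≠ 0) (x : ℝ) :
    Real.exp x * gaussianPDFReal 0 w x = Real.exp ((w:ℝ) / 2) * gaussianPDFReal (w:ℝ) w x := by
  have hw' : (0:ℝ) < (w:ℝ) := by positivity
  have h1 : ∀ c a b : ℝ, Real.exp a * (c * Real.exp b) = c * Real.exp (a + b) := fun c a b => by
    rw [Real.exp_add]; ring
  have harg : x + -(x - 0) ^ 2 / (2 * (w:ℝ)) = (w:ℝ) / 2 + -(x - (w:ℝ)) ^ 2 / (2 * (w:ℝ)) := by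
    field_simp; ring
  simp only [gaussianPDFReal, h1, harg]

lemma myGaussianReal_int {w : ℝ≥0} (hw : w ≠ 0) (f : ℝ → ℝ) :
    ∫ x, f x ∂(gaussianReal 0 w) = ∫ x, gaussianPDFReal 0 w x * f x := by
  rw [gaussianReal_of_var_ne_zero _ hw]
  have h0 : (gaussianPDF 0 w)
      = fun x => ((Real.toNNReal (gaussianPDFReal 0 w x) : ℝ≥0) : ℝ≥0∞) := rfl
  rw [h0, integral_withDensity_eq_integral_smul
    ((measurable_gaussianPDFReal 0 w).real_toNNReal) f]
  congr 1
  funext x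
  simp [NNReal.smul_def, Real.coe_toNNReal _ (gaussianPDFReal_nonneg 0 w x)]

lemma myGaussianReal_integrable {w : ℝ≥0} (hw : w ≠ 0) (f : ℝ → ℝ) :
    Integrable f (gaussianReal 0 w)
      ↔ Integrable (fun x => gaussianPDFReal 0 w x * f x) volume := by
  rw [gaussianReal_of_var_ne_zero _ hw]
  have h0 : (gaussianPDF 0 w)
      = fun x => ((Real.toNNReal (gaussianPDFReal 0 w x) : ℝ≥0) : ℝ≥0∞) := rfl
  rw [h0, integrable_withDensity_iff_integrable_smul
    ((measurable_gaussianPDFReal 0 w).real_toNNReal)]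
  have h1 : (fun x => (Real.toNNReal (gaussianPDFReal 0 w x)) • f x)
      = fun x => gaussianPDFReal 0 w x * f x := by
    funext x
    simp [NNReal.smul_def, Real.coe_toNNReal _ (gaussianPDFReal_nonneg 0 w x)]
  rw [h1]

lemma myGaussian_moments (w : ℝ≥0) :
    Integrable (fun x : ℝ => Real.exp x) (gaussianReal 0 w) ∧
    Integrable (fun x : ℝ => x ^ 2) (gaussianReal 0 w) ∧
    (∫ x, Real.exp x ∂(gaussianReal 0 w)) = Real.exp ((w:ℝ) / 2) ∧
    (∫ x, x ^ 2 ∂(gaussianReal 0 w)) = (w : ℝ) := by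
  by_cases hw : w = 0
  · subst hw
    rw [gaussianReal_zero_var]
    refine ⟨?_, ?_, ?_, ?_⟩
    · exact (integrable_const (Real.exp 0)).congr (ae_eq_dirac Real.exp).symm
    · exact (integrable_const ((0:ℝ) ^ 2)).congr (ae_eq_dirac (fun x : ℝ => x ^ 2)).symm
    · rw [integral_dirac]; norm_num
    · rw [integral_dirac]; norm_num
  · have hw' : (0:ℝ) < (w:ℝ) := by positivity
    have hb : (0:ℝ) < (2 * (w:ℝ))⁻¹ := by positivity
    have harg : ∀ x : ℝ, -(x - 0) ^ 2 / (2 * (w:ℝ)) = -(2 * (w:ℝ))⁻¹ * x ^ 2 := by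
      intro x; field_simp; ring
    have hpdfsq : (fun x : ℝ => gaussianPDFReal 0 w x * x ^ 2)
        = fun x : ℝ => (Real.sqrt (2 * π * (w:ℝ)))⁻¹ *
          (x ^ 2 * Real.exp (-(2 * (w:ℝ))⁻¹ * x ^ 2)) := by
      funext x
      simp only [gaussianPDFReal, harg x]
      ring
    have hIsq : Integrable (fun x : ℝ => x ^ 2) (gaussianReal 0 w) := by
      rw [myGaussianReal_integrable hw, hpdfsq]
      exact (myIntegrable_sq_exp hb).const_mul _
    have hpdfexp : (fun x : ℝ => gaussianPDFReal 0 w x * Real.exp x)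
        = fun x : ℝ => Real.exp ((w:ℝ) / 2) * gaussianPDFReal (w:ℝ) w x := by
      funext x
      rw [mul_comm, myPdf_exp hw]
    have hIexp : Integrable (fun x : ℝ => Real.exp x) (gaussianReal 0 w) := by
      rw [myGaussianReal_integrable hw, hpdfexp]
      exact (integrable_gaussianPDFReal _ _).const_mul _
    refine ⟨hIexp, hIsq, ?_, ?_⟩
    · rw [myGaussianReal_int hw]
      rw [show (fun x : ℝ => gaussianPDFReal 0 w x * Real.exp x)
          = fun x : ℝ => Real.exp ((w:ℝ) / 2) * gaussianPDFReal (w:ℝ) w x from hpdfexp]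
      rw [MeasureTheory.integral_const_mul, integral_gaussianPDFReal_eq_one _ hw, mul_one]
    · rw [myGaussianReal_int hw]
      rw [show (fun x : ℝ => gaussianPDFReal 0 w x * x ^ 2)
          = fun x : ℝ => x ^ 2 * gaussianPDFReal 0 w x from funext fun x => mul_comm _ _]
      exact myPdf_second_moment hw


lemma myMapMoments {Ω : Type*} [MeasureSpace Ω] [IsProbabilityMeasure (ℙ : Measure Ω)]
    (Y : Ω → ℝ) (hY : Measurable Y) (w : ℝ≥0) (h : Measure.map Y ℙ = gaussianReal 0 w) :
    Integrable (fun ω => Real.exp (Y ω)) ℙ ∧ Integrable (fun ω => Y ω ^ 2) ℙ ∧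
    (∫ ω, Real.exp (Y ω) ∂ℙ) = Real.exp ((∫ ω, Y ω ^ 2 ∂ℙ) / 2) := by
  obtain ⟨hIexp, hIsq, hEexp, hEsq⟩ := myGaussian_moments w
  rw [← h] at hIexp hIsq hEexp hEsq
  have hYae : AEMeasurable Y ℙ := hY.aemeasurable
  have hexpM : AEStronglyMeasurable (fun x : ℝ => Real.exp x) (Measure.map Y ℙ) :=
    Real.continuous_exp.measurable.aestronglyMeasurable
  have hsqM : AEStronglyMeasurable (fun x : ℝ => x ^ 2) (Measure.map Y ℙ) :=
    (measurable_id.pow_const 2).aestronglyMeasurable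
  have h1 : Integrable (fun ω => Real.exp (Y ω)) ℙ :=
    (integrable_map_measure hexpM hYae).mp hIexp
  have h2 : Integrable (fun ω => Y ω ^ 2) ℙ :=
    (integrable_map_measure hsqM hYae).mp hIsq
  have e1 : ∫ ω, Real.exp (Y ω) ∂ℙ = Real.exp ((w:ℝ) / 2) := by
    rw [← hEexp, integral_map hYae hexpM]
  have e2 : ∫ ω, Y ω ^ 2 ∂ℙ = (w:ℝ) := by
    rw [← hEsq, integral_map hYae hsqM]
  exact ⟨h1, h2, by rw [e1, e2]⟩

end Helpers

/-- **`L^p` convergence of stochastic exponentials along a jointly Gaussian sequence.**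
If each pair `(X_n, X)` is jointly centered Gaussian, the variances are uniformly
bounded by `V`, and `E[(X_n - X)²] → 0`, then the stochastic exponentials
`exp(X_n - v_n/2)` converge to `exp(X - v/2)` in `L^p` for every `p ≥ 1`. -/
theorem stochastic_exponential_Lp_convergence
    (Ω : Type*) [MeasureSpace Ω] [IsProbabilityMeasure (ℙ : Measure Ω)]
    (V : ℝ) (hV : 0 ≤ V)
    (X : Ω → ℝ) (Xn : ℕ → Ω → ℝ)
    (hX_meas : Measurable X) (hXn_meas : ∀ n, Measurable (Xn n))
    (hGauss : ∀ n, ∀ a b : ℝ, ∃ w : NNReal,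
      Measure.map (fun ω => a * Xn n ω + b * X ω) ℙ = gaussianReal 0 w)
    (hvn : ∀ n, (∫ ω, Xn n ω ^ 2 ∂ℙ) ≤ V) (hv : (∫ ω, X ω ^ 2 ∂ℙ) ≤ V)
    (hconv : Tendsto (fun n => ∫ ω, (Xn n ω - X ω) ^ 2 ∂ℙ) atTop (nhds 0)) :
    ∀ p : ℝ, 1 ≤ p →
      Tendsto (fun n =>
          ∫ ω, |Real.exp (Xn n ω - (∫ ω', Xn n ω' ^ 2 ∂ℙ) / 2)
                  - Real.exp (X ω - (∫ ω', X ω' ^ 2 ∂ℙ) / 2)| ^ p ∂ℙ)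
        atTop (nhds 0) := by
  intro p hp
  have hp0 : (0:ℝ) < p := lt_of_lt_of_le zero_lt_one hp
  -- abbreviations
  obtain ⟨vN, hvN⟩ : ∃ f : ℕ → ℝ, ∀ n, f n = ∫ ω, Xn n ω ^ 2 ∂ℙ := ⟨_, fun _ => rfl⟩
  obtain ⟨v', hv'⟩ : ∃ r : ℝ, r = ∫ ω, X ω ^ 2 ∂ℙ := ⟨_, rfl⟩
  obtain ⟨cN, hcN⟩ : ∃ f : ℕ → ℝ, ∀ n, f n = ∫ ω, Xn n ω * X ω ∂ℙ := ⟨_, fun _ => rfl⟩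
  obtain ⟨wN, hwN⟩ : ∃ f : ℕ → ℝ, ∀ n, f n = ∫ ω, (Xn n ω - X ω) ^ 2 ∂ℙ := ⟨_, fun _ => rfl⟩
  obtain ⟨A, hA⟩ : ∃ f : ℕ → Ω → ℝ, ∀ n ω, f n ω = Real.exp (Xn n ω - vN n / 2) :=
    ⟨_, fun _ _ => rfl⟩
  obtain ⟨B, hB⟩ : ∃ f : Ω → ℝ, ∀ ω, f ω = Real.exp (X ω - v' / 2) := ⟨_, fun _ => rfl⟩
  simp only [← hvN, ← hv', ← hA, ← hB]
  -- key Gaussian computation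
  have key : ∀ (n : ℕ) (a b : ℝ),
      Integrable (fun ω => Real.exp (a * Xn n ω + b * X ω)) ℙ ∧
      Integrable (fun ω => (a * Xn n ω + b * X ω) ^ 2) ℙ ∧
      (∫ ω, Real.exp (a * Xn n ω + b * X ω) ∂ℙ)
        = Real.exp ((∫ ω, (a * Xn n ω + b * X ω) ^ 2 ∂ℙ) / 2) := by
    intro n a b
    obtain ⟨w, hw⟩ := hGauss n a b
    exact myMapMoments _ (((hXn_meas n).const_mul a).add ((hX_meas).const_mul b)) w hw
  -- integrabilities
  have intAdd : ∀ {f g : Ω → ℝ}, Integrable f ℙ → Integrable g ℙ →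
      Integrable (fun ω => f ω + g ω) ℙ := fun hf hg =>
    (hf.add hg).congr (Filter.Eventually.of_forall fun ω => rfl)
  have intSub : ∀ {f g : Ω → ℝ}, Integrable f ℙ → Integrable g ℙ →
      Integrable (fun ω => f ω - g ω) ℙ := fun hf hg =>
    (hf.sub hg).congr (Filter.Eventually.of_forall fun ω => rfl)
  have iXnsq : ∀ n, Integrable (fun ω => Xn n ω ^ 2) ℙ := fun n =>
    ((key n 1 0).2.1).congr (Filter.Eventually.of_forall fun ω => by ring)
  have iXsq : Integrable (fun ω => X ω ^ 2) ℙ :=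
    ((key 0 0 1).2.1).congr (Filter.Eventually.of_forall fun ω => by ring)
  have iXnX : ∀ n, Integrable (fun ω => Xn n ω * X ω) ℙ := fun n => by
    have h := (intSub (intSub ((key n 1 1).2.1) (iXnsq n)) iXsq).const_mul (1/2)
    exact h.congr (Filter.Eventually.of_forall fun ω => by ring)
  have iSub : ∀ n, Integrable (fun ω => (Xn n ω - X ω) ^ 2) ℙ := fun n => by
    have h := intAdd (intSub (iXnsq n) ((iXnX n).const_mul 2)) iXsq
    exact h.congr (Filter.Eventually.of_forall fun ω => by ring)
  -- second moment expansion
  have hS : ∀ (n : ℕ) (a b : ℝ), (∫ ω, (a * Xn n ω + b * X ω) ^ 2 ∂ℙ)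
      = a^2 * vN n + 2*a*b * cN n + b^2 * v' := by
    intro n a b
    have e : (fun ω => (a * Xn n ω + b * X ω) ^ 2)
        = fun ω => a^2 * (Xn n ω ^ 2) + (2*a*b) * (Xn n ω * X ω) + b^2 * (X ω ^ 2) :=
      funext fun ω => by ring
    have h1 : Integrable (fun ω => a^2 * Xn n ω ^ 2 + 2*a*b * (Xn n ω * X ω)) ℙ :=
      intAdd ((iXnsq n).const_mul _) ((iXnX n).const_mul _)
    rw [e, integral_add h1 (iXsq.const_mul _),
      integral_add ((iXnsq n).const_mul _) ((iXnX n).const_mul _),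
      MeasureTheory.integral_const_mul, MeasureTheory.integral_const_mul,
      MeasureTheory.integral_const_mul, hvN, hcN, hv']
  have hwn_eq : ∀ n, wN n = vN n - 2 * cN n + v' := by
    intro n
    have e : (fun ω => (Xn n ω - X ω) ^ 2)
        = fun ω => Xn n ω ^ 2 - 2 * (Xn n ω * X ω) + X ω ^ 2 := funext fun ω => by ring
    rw [hwN, e, integral_add (intSub (iXnsq n) ((iXnX n).const_mul 2)) iXsq,
      integral_sub (iXnsq n) ((iXnX n).const_mul 2), MeasureTheory.integral_const_mul,
      hvN, hcN, hv']
  have hwn0 : Tendsto wN atTop (nhds 0) := hconv.congr fun n => (hwN n).symm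
  have hv'0 : 0 ≤ v' := hv' ▸ integral_nonneg fun ω => sq_nonneg _
  -- Cauchy-Schwarz
  have hCS : ∀ n, |cN n - v'| ≤ (wN n) ^ (1/2:ℝ) * v' ^ (1/2:ℝ) := by
    intro n
    have hint : Integrable (fun ω => (Xn n ω - X ω) * X ω) ℙ :=
      (intSub (iXnX n) iXsq).congr (Filter.Eventually.of_forall fun ω => by ring)
    have e : cN n - v' = ∫ ω, (Xn n ω - X ω) * X ω ∂ℙ := by
      rw [show (fun ω => (Xn n ω - X ω) * X ω) = fun ω => Xn n ω * X ω - X ω ^ 2 from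
        funext fun ω => by ring, integral_sub (iXnX n) iXsq, hcN, hv']
    have hconj2 : Real.HolderConjugate 2 2 := Real.HolderConjugate.two_two
    have hm1 : MemLp (fun ω => Xn n ω - X ω) (ENNReal.ofReal 2) ℙ := by
      rw [show ENNReal.ofReal 2 = 2 by norm_num]
      exact (memLp_two_iff_integrable_sq
        (((hXn_meas n).sub hX_meas).aestronglyMeasurable)).mpr (iSub n)
    have hm2 : MemLp X (ENNReal.ofReal 2) ℙ := by
      rw [show ENNReal.ofReal 2 = 2 by norm_num]
      exact (memLp_two_iff_integrable_sq hX_meas.aestronglyMeasurable).mpr iXsq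
    have h := integral_mul_norm_le_Lp_mul_Lq hconj2 hm1 hm2
    have eL : ∫ ω, ‖Xn n ω - X ω‖ * ‖X ω‖ ∂ℙ = ∫ ω, ‖(Xn n ω - X ω) * X ω‖ ∂ℙ := by
      congr 1; funext ω; rw [norm_mul]
    have eR1 : ∫ ω, ‖Xn n ω - X ω‖ ^ (2:ℝ) ∂ℙ = wN n := by
      rw [hwN]; congr 1; funext ω
      rw [Real.rpow_two, Real.norm_eq_abs, sq_abs]
    have eR2 : ∫ ω, ‖X ω‖ ^ (2:ℝ) ∂ℙ = v' := by
      rw [hv']; congr 1; funext ω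
      rw [Real.rpow_two, Real.norm_eq_abs, sq_abs]
    rw [eL, eR1, eR2] at h
    calc |cN n - v'| = |∫ ω, (Xn n ω - X ω) * X ω ∂ℙ| := by rw [e]
    _ ≤ ∫ ω, ‖(Xn n ω - X ω) * X ω‖ ∂ℙ := by
        rw [← Real.norm_eq_abs]; exact norm_integral_le_integral_norm _
    _ ≤ wN n ^ (1/2:ℝ) * v' ^ (1/2:ℝ) := h
  have hcn : Tendsto cN atTop (nhds v') := by
    have h1 : Tendsto (fun n => (wN n) ^ (1/2:ℝ) * v' ^ (1/2:ℝ)) atTop (nhds 0) := by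
      have h2 := (hwn0.rpow_const (Or.inr (by norm_num : (0:ℝ) ≤ 1/2))).mul_const (v' ^ (1/2:ℝ))
      rwa [Real.zero_rpow (by norm_num), zero_mul] at h2
    have h2 : Tendsto (fun n => cN n - v') atTop (nhds 0) :=
      squeeze_zero_norm (fun n => by rw [Real.norm_eq_abs]; exact hCS n) h1
    have h3 := h2.add_const v'
    rw [zero_add] at h3
    exact h3.congr fun n => by ring
  have hvn_tend : Tendsto vN atTop (nhds v') := by
    have h1 := (hwn0.add (hcn.const_mul 2)).sub_const v'
    rw [zero_add] at h1
    have h2 : (2:ℝ) * v' - v' = v' := by ring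
    rw [h2] at h1
    exact h1.congr fun n => by rw [hwn_eq n]; ring
  -- choose even integer exponent N > p
  obtain ⟨m, hmdef⟩ : ∃ m : ℕ, m = ⌈p⌉₊ := ⟨_, rfl⟩
  obtain ⟨N, hNdef⟩ : ∃ N : ℕ, N = 2 * m := ⟨_, rfl⟩
  have hN0 : N ≠ 0 := by
    rw [hNdef, hmdef]
    have : 1 ≤ ⌈p⌉₊ := Nat.one_le_ceil_iff.mpr hp0
    omega
  have hNeven : Even N := hNdef ▸ even_two_mul m
  have hpN : p < (N:ℝ) := by
    have h1 : p ≤ (m:ℝ) := by rw [hmdef]; exact Nat.le_ceil p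
    have h2 : (N:ℝ) = 2 * (m:ℝ) := by rw [hNdef]; push_cast; ring
    linarith
  have hNR0 : (0:ℝ) < (N:ℝ) := lt_trans hp0 hpN
  -- moments of products of the stochastic exponentials
  have keyAB : ∀ (n : ℕ) (k j : ℕ),
      Integrable (fun ω => A n ω ^ k * B ω ^ j) ℙ ∧
      (∫ ω, A n ω ^ k * B ω ^ j ∂ℙ)
        = Real.exp (((k:ℝ)^2 * vN n + 2*(k:ℝ)*(j:ℝ) * cN n + (j:ℝ)^2 * v') / 2
            - ((k:ℝ) * vN n + (j:ℝ) * v') / 2) := by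
    intro n k j
    have hpt : (fun ω => A n ω ^ k * B ω ^ j)
        = fun ω => Real.exp (-(((k:ℝ) * vN n + (j:ℝ) * v') / 2))
            * Real.exp ((k:ℝ) * Xn n ω + (j:ℝ) * X ω) := by
      funext ω
      rw [hA, hB, ← Real.exp_nat_mul, ← Real.exp_nat_mul, ← Real.exp_add, ← Real.exp_add]
      congr 1
      ring
    constructor
    · rw [hpt]; exact ((key n k j).1).const_mul _
    · rw [hpt, MeasureTheory.integral_const_mul, (key n k j).2.2, hS n k j, ← Real.exp_add]
      congr 1
      ring
  -- binomial expansion of the N-th moment of the difference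
  have hIN : ∀ n : ℕ, Integrable (fun ω => (A n ω - B ω) ^ N) ℙ ∧
      (∫ ω, (A n ω - B ω) ^ N ∂ℙ)
        = ∑ k ∈ Finset.range (N+1), (-1:ℝ)^(k+N) * (N.choose k : ℝ) *
            Real.exp (((k:ℝ)^2 * vN n + 2*(k:ℝ)*((N-k:ℕ):ℝ) * cN n + ((N-k:ℕ):ℝ)^2 * v') / 2
              - ((k:ℝ) * vN n + ((N-k:ℕ):ℝ) * v') / 2) := by
    intro n
    have hpt : (fun ω => (A n ω - B ω) ^ N)
        = fun ω => ∑ k ∈ Finset.range (N+1),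
            (-1:ℝ)^(k+N) * (N.choose k : ℝ) * (A n ω ^ k * B ω ^ (N-k)) := by
      funext ω
      rw [sub_pow]
      exact Finset.sum_congr rfl fun k _ => by ring
    constructor
    · rw [hpt]
      exact integrable_finset_sum _ fun k _ => ((keyAB n k (N-k)).1).const_mul _
    · rw [hpt, integral_finset_sum _ (fun k _ => ((keyAB n k (N-k)).1).const_mul _)]
      refine Finset.sum_congr rfl fun k _ => ?_
      rw [MeasureTheory.integral_const_mul, (keyAB n k (N-k)).2]
  -- each term of the sum converges, with a common limit exponent
  have hterm : ∀ k ∈ Finset.range (N+1),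
      Tendsto (fun n => (-1:ℝ)^(k+N) * (N.choose k : ℝ) *
          Real.exp (((k:ℝ)^2 * vN n + 2*(k:ℝ)*((N-k:ℕ):ℝ) * cN n + ((N-k:ℕ):ℝ)^2 * v') / 2
            - ((k:ℝ) * vN n + ((N-k:ℕ):ℝ) * v') / 2)) atTop
        (nhds ((-1:ℝ)^(k+N) * (N.choose k : ℝ) *
          Real.exp (((N:ℝ)^2 * v' - (N:ℝ) * v') / 2))) := by
    intro k hk
    have hkN : k ≤ N := Nat.lt_succ_iff.mp (Finset.mem_range.mp hk)
    have hcast : ((N - k : ℕ):ℝ) = (N:ℝ) - (k:ℝ) := by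
      push_cast [hkN]; ring
    have T1 : Tendsto (fun n => (k:ℝ)^2 * vN n + 2*(k:ℝ)*((N-k:ℕ):ℝ) * cN n
        + ((N-k:ℕ):ℝ)^2 * v') atTop
        (nhds ((k:ℝ)^2 * v' + 2*(k:ℝ)*((N-k:ℕ):ℝ) * v' + ((N-k:ℕ):ℝ)^2 * v')) :=
      ((hvn_tend.const_mul _).add (hcn.const_mul _)).add_const _
    have T2 : Tendsto (fun n => (k:ℝ) * vN n + ((N-k:ℕ):ℝ) * v') atTop
        (nhds ((k:ℝ) * v' + ((N-k:ℕ):ℝ) * v')) :=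
      (hvn_tend.const_mul _).add_const _
    have T3 := (((T1.div_const 2).sub (T2.div_const 2)).rexp).const_mul
      ((-1:ℝ)^(k+N) * (N.choose k : ℝ))
    have heq : ((k:ℝ)^2 * v' + 2*(k:ℝ)*((N-k:ℕ):ℝ) * v' + ((N-k:ℕ):ℝ)^2 * v') / 2
        - ((k:ℝ) * v' + ((N-k:ℕ):ℝ) * v') / 2 = ((N:ℝ)^2 * v' - (N:ℝ) * v') / 2 := by
      rw [hcast]; ring
    rw [heq] at T3
    exact T3.congr fun n => by ring
  -- the limits sum to zero
  have hsum0 : ∑ k ∈ Finset.range (N+1), (-1:ℝ)^(k+N) * (N.choose k : ℝ) *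
      Real.exp (((N:ℝ)^2 * v' - (N:ℝ) * v') / 2) = 0 := by
    rw [← Finset.sum_mul]
    have h := sub_pow (1:ℝ) 1 N
    rw [sub_self, zero_pow hN0] at h
    simp only [one_pow, mul_one, one_mul] at h
    rw [← h, zero_mul]
  have hItend : Tendsto (fun n => ∫ ω, (A n ω - B ω) ^ N ∂ℙ) atTop (nhds 0) := by
    have h1 := tendsto_finset_sum (Finset.range (N+1)) hterm
    rw [hsum0] at h1
    exact h1.congr fun n => ((hIN n).2).symm
  -- measurability
  have hABmeas : ∀ n, Measurable (fun ω => A n ω - B ω) := by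
    intro n
    simp only [hA, hB]
    exact (((hXn_meas n).sub measurable_const).exp).sub ((hX_meas.sub measurable_const).exp)
  have hofN0 : ENNReal.ofReal (N:ℝ) ≠ 0 := ne_of_gt (ENNReal.ofReal_pos.mpr hNR0)
  have hofNtop : ENNReal.ofReal (N:ℝ) ≠ ⊤ := ENNReal.ofReal_ne_top
  have hmemN : ∀ n, MemLp (fun ω => A n ω - B ω) (ENNReal.ofReal (N:ℝ)) ℙ := by
    intro n
    refine (memLp_norm_rpow_iff ((hABmeas n).aestronglyMeasurable) hofN0 hofNtop).mp ?_
    rw [ENNReal.div_self hofN0 hofNtop, memLp_one_iff_integrable]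
    refine ((hIN n).1).congr (Filter.Eventually.of_forall fun ω => ?_)
    simp only [ENNReal.toReal_ofReal hNR0.le, Real.norm_eq_abs, Real.rpow_natCast,
      hNeven.pow_abs]
  -- conjugate exponents
  obtain ⟨r, hrdef⟩ : ∃ r : ℝ, r = (N:ℝ) / p := ⟨_, rfl⟩
  have hr1 : 1 < r := hrdef ▸ (one_lt_div hp0).mpr hpN
  have hr0 : (0:ℝ) < r := lt_trans zero_lt_one hr1
  have hrm1 : r - 1 ≠ 0 := ne_of_gt (by linarith)
  have hconj : Real.HolderConjugate r (r / (r-1)) :=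
    (Real.holderConjugate_iff_eq_conjExponent hr1).mpr rfl
  have hfmem : ∀ n, MemLp (fun ω => ‖A n ω - B ω‖ ^ p) (ENNReal.ofReal r) ℙ := by
    intro n
    have h := (hmemN n).norm_rpow_div (ENNReal.ofReal p)
    rw [ENNReal.toReal_ofReal hp0.le, ← ENNReal.ofReal_div_of_pos hp0, ← hrdef] at h
    exact h
  have honemem : MemLp (fun _ : Ω => (1:ℝ)) (ENNReal.ofReal (r / (r-1))) ℙ := memLp_const 1
  have hHold : ∀ n, (∫ ω, |A n ω - B ω| ^ p ∂ℙ)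
      ≤ (∫ ω, (A n ω - B ω) ^ N ∂ℙ) ^ (1/r) := by
    intro n
    have h := integral_mul_norm_le_Lp_mul_Lq hconj (hfmem n) honemem
    have eL : (∫ ω, ‖‖A n ω - B ω‖ ^ p‖ * ‖(1:ℝ)‖ ∂ℙ) = ∫ ω, |A n ω - B ω| ^ p ∂ℙ := by
      congr 1
      funext ω
      rw [norm_one, mul_one, Real.norm_eq_abs (‖A n ω - B ω‖ ^ p), Real.norm_eq_abs,
        abs_of_nonneg (Real.rpow_nonneg (abs_nonneg _) _)]
    have hpr : p * r = (N:ℝ) := by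
      rw [hrdef]
      field_simp
    have eR1 : (∫ ω, ‖‖A n ω - B ω‖ ^ p‖ ^ r ∂ℙ) = ∫ ω, (A n ω - B ω) ^ N ∂ℙ := by
      congr 1
      funext ω
      rw [Real.norm_eq_abs (‖A n ω - B ω‖ ^ p), Real.norm_eq_abs,
        abs_of_nonneg (Real.rpow_nonneg (abs_nonneg _) _),
        ← Real.rpow_mul (abs_nonneg _), hpr, Real.rpow_natCast, hNeven.pow_abs]
    have eR2 : (∫ ω, ‖(1:ℝ)‖ ^ (r/(r-1)) ∂(ℙ : Measure Ω)) = 1 := by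
      simp
    rw [eL, eR1, eR2] at h
    rwa [Real.one_rpow, mul_one] at h
  have hnn : ∀ n, 0 ≤ ∫ ω, |A n ω - B ω| ^ p ∂ℙ := fun n =>
    integral_nonneg fun ω => Real.rpow_nonneg (abs_nonneg _) _
  have h1r0 : (0:ℝ) < 1/r := one_div_pos.mpr hr0
  have hup : Tendsto (fun n => (∫ ω, (A n ω - B ω) ^ N ∂ℙ) ^ (1/r : ℝ)) atTop (nhds 0) := by
    have h := hItend.rpow_const (Or.inr h1r0.le)
    rwa [Real.zero_rpow (ne_of_gt h1r0)] at h
  exact squeeze_zero hnn hHold hup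
end
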